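/- Let a, b, S > 0 and set Λ = bS²/2 + √(aS + b²S⁴/4). Define F(ℓ) = ℓ/12 + (a/4)·√(ℓ/b + a²/(4b²)) − a²/(8b) for ℓ ≥ 0. Then for every ℓ ≥ Λ³ one has F(ℓ) ≥ aSΛ/3 + bS²Λ²/12, with equality if and only if ℓ = Λ³; in particular F(Λ³) = aSΛ/3 + bS²Λ²/12. -/

import Mathlib

open Real

/-- with `Λ = bS²/2 + √(aS + b²S⁴/4)` and
`F(ℓ) = ℓ/12 + (a/4)√(ℓ/b + a²/(4b²)) − a²/(8b)`, for every `ℓ ≥ Λ³` one has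
`F(ℓ) ≥ aSΛ/3 + bS²Λ²/12`, with equality iff `ℓ = Λ³`; in particular
`F(Λ³) = aSΛ/3 + bS²Λ²/12`. -/
theorem stmt_9 (a b S : ℝ) (ha : 0 < a) (hb : 0 < b) (hS : 0 < S)
    (Λ : ℝ) (hΛ : Λ = b * S ^ 2 / 2 + Real.sqrt (a * S + b ^ 2 * S ^ 4 / 4))
    (F : ℝ → ℝ)
    (hF : ∀ ℓ, F ℓ = ℓ / 12 + a / 4 * Real.sqrt (ℓ / b + a ^ 2 / (4 * b ^ 2))
      - a ^ 2 / (8 * b)) :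
    (∀ ℓ, Λ ^ 3 ≤ ℓ →
      a * S * Λ / 3 + b * S ^ 2 * Λ ^ 2 / 12 ≤ F ℓ ∧
      (F ℓ = a * S * Λ / 3 + b * S ^ 2 * Λ ^ 2 / 12 ↔ ℓ = Λ ^ 3)) ∧
    F (Λ ^ 3) = a * S * Λ / 3 + b * S ^ 2 * Λ ^ 2 / 12 := by
  have hD : (0:ℝ) ≤ a * S + b ^ 2 * S ^ 4 / 4 := by positivity
  have hsq : Real.sqrt (a * S + b ^ 2 * S ^ 4 / 4) ^ 2 = a * S + b ^ 2 * S ^ 4 / 4 :=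
    Real.sq_sqrt hD
  have hΛpos : 0 < Λ := by
    rw [hΛ]
    have : 0 ≤ Real.sqrt (a * S + b ^ 2 * S ^ 4 / 4) := Real.sqrt_nonneg _
    nlinarith
  have hΛ2 : Λ ^ 2 = b * S ^ 2 * Λ + a * S := by
    rw [hΛ]; nlinarith [hsq]
  have h3 : Λ ^ 3 = b * S ^ 2 * Λ ^ 2 + a * S * Λ := by nlinarith [hΛ2]
  -- key sqrt identity at ℓ = Λ³
  have harg : Λ ^ 3 / b + a ^ 2 / (4 * b ^ 2) = (Λ * S + a / (2 * b)) ^ 2 := by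
    field_simp
    linear_combination (16 * b) * h3
  have hkey : Real.sqrt (Λ ^ 3 / b + a ^ 2 / (4 * b ^ 2)) = Λ * S + a / (2 * b) := by
    rw [harg, Real.sqrt_sq (by positivity)]
  have hFΛ : F (Λ ^ 3) = a * S * Λ / 3 + b * S ^ 2 * Λ ^ 2 / 12 := by
    rw [hF, hkey, h3]; ring
  refine ⟨fun ℓ hℓ => ?_, hFΛ⟩
  have hmono : Real.sqrt (Λ ^ 3 / b + a ^ 2 / (4 * b ^ 2))
      ≤ Real.sqrt (ℓ / b + a ^ 2 / (4 * b ^ 2)) := by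
    apply Real.sqrt_le_sqrt
    have : Λ ^ 3 / b ≤ ℓ / b := by gcongr
    linarith
  have hdiff : F (Λ ^ 3) + (ℓ - Λ ^ 3) / 12 ≤ F ℓ := by
    rw [hF, hF]
    nlinarith [hmono, ha.le]
  constructor
  · linarith [hFΛ ▸ hdiff]
  · constructor
    · intro h
      have : (ℓ - Λ ^ 3) / 12 ≤ 0 := by rw [hFΛ] at hdiff; linarith
      linarith
    · intro h; rw [h, hFΛ]
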